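/- For any nonempty coalition Q and any player j ∉ Q, joining reduces total cost exactly when player j prefers to join: costw({j}) + costw(Q) ≥ costw(Q ∪ {j}) if and only if err_j({j}) ≥ err_j(Q ∪ {j}). -/

import Mathlib

open Finset

variable {ι : Type*}

/-- The expected error of player `j` in coalition `C`. -/
noncomputable def err [DecidableEq ι] (μ σ2 : ℝ) (n : ι → ℕ) (C : Finset ι) (j : ι) : ℝ :=
  μ / (∑ i ∈ C, (n i : ℝ)) +
    σ2 * ((∑ i ∈ C.erase j, (n i : ℝ) ^ 2) + (∑ i ∈ C.erase j, (n i : ℝ)) ^ 2) /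
      (∑ i ∈ C, (n i : ℝ)) ^ 2

/-- The weighted cost of a coalition `C`. -/
noncomputable def costw [DecidableEq ι] (μ σ2 : ℝ) (n : ι → ℕ) (C : Finset ι) : ℝ :=
  ∑ j ∈ C, (n j : ℝ) * err μ σ2 n C j

lemma costw_eq [DecidableEq ι] (μ σ2 : ℝ) (n : ι → ℕ) (C : Finset ι) (hC : C.Nonempty)
    (hn : ∀ i, 0 < n i) :
    costw μ σ2 n C = μ + σ2 * ((∑ i ∈ C, (n i : ℝ)) ^ 2 - ∑ i ∈ C, (n i : ℝ) ^ 2)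
      / (∑ i ∈ C, (n i : ℝ)) := by
  set S := ∑ i ∈ C, (n i : ℝ) with hS
  set A := ∑ i ∈ C, (n i : ℝ) ^ 2 with hA
  have hSpos : 0 < S := Finset.sum_pos (fun i _ => by exact_mod_cast hn i) hC
  have hS0 : S ≠ 0 := ne_of_gt hSpos
  unfold costw err
  have key : ∀ j ∈ C, (n j : ℝ) * (μ / S +
      σ2 * ((∑ i ∈ C.erase j, (n i : ℝ) ^ 2) + (∑ i ∈ C.erase j, (n i : ℝ)) ^ 2) / S ^ 2)
      = (n j : ℝ) * (μ / S) +
        σ2 / S ^ 2 * ((n j : ℝ) * A + (n j : ℝ) * S ^ 2 - 2 * S * (n j : ℝ) ^ 2) := by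
    intro j hjC
    rw [Finset.sum_erase_eq_sub hjC, Finset.sum_erase_eq_sub hjC, ← hS, ← hA]
    field_simp
    ring
  rw [Finset.sum_congr rfl key, Finset.sum_add_distrib, ← Finset.sum_mul, ← hS,
    ← Finset.mul_sum]
  have h1 : ∑ j ∈ C, ((n j : ℝ) * A + (n j : ℝ) * S ^ 2 - 2 * S * (n j : ℝ) ^ 2)
      = S * A + S * S ^ 2 - 2 * S * A := by
    rw [Finset.sum_sub_distrib, Finset.sum_add_distrib, ← Finset.sum_mul, ← Finset.sum_mul,
      ← Finset.mul_sum, ← hS, ← hA]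
  rw [h1]
  field_simp
  ring

/-- For any nonempty coalition `Q` and player `j ∉ Q`, joining reduces total cost
exactly when player `j` prefers to join:
`costw {j} + costw Q ≥ costw (Q ∪ {j})` iff `err_j({j}) ≥ err_j(Q ∪ {j})`. -/
theorem join_reduces_cost_iff_prefers [DecidableEq ι] (μ σ2 : ℝ) (n : ι → ℕ)
    (hμ : 0 < μ) (hσ : 0 < σ2) (hn : ∀ i, 0 < n i)
    (Q : Finset ι) (hQ : Q.Nonempty) (j : ι) (hj : j ∉ Q) :
    costw μ σ2 n {j} + costw μ σ2 n Q ≥ costw μ σ2 n (insert j Q) ↔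
      err μ σ2 n {j} j ≥ err μ σ2 n (insert j Q) j := by
  set S := ∑ i ∈ Q, (n i : ℝ) with hS
  set A := ∑ i ∈ Q, (n i : ℝ) ^ 2 with hA
  have hSpos : 0 < S := Finset.sum_pos (fun i _ => by exact_mod_cast hn i) hQ
  have hnj : (0 : ℝ) < (n j : ℝ) := by exact_mod_cast hn j
  have hT : 0 < (n j : ℝ) + S := by linarith
  -- sums over insert
  have hsum : ∑ i ∈ insert j Q, (n i : ℝ) = (n j : ℝ) + S := Finset.sum_insert hj
  have hsumsq : ∑ i ∈ insert j Q, (n i : ℝ) ^ 2 = (n j : ℝ) ^ 2 + A := Finset.sum_insert hj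
  have herase : (insert j Q).erase j = Q := Finset.erase_insert hj
  -- rewrite the costw values
  have hc1 : costw μ σ2 n {j} = μ := by
    rw [costw_eq μ σ2 n {j} (Finset.singleton_nonempty j) hn]
    simp
  have hc2 : costw μ σ2 n Q = μ + σ2 * (S ^ 2 - A) / S :=
    costw_eq μ σ2 n Q hQ hn
  have hc3 : costw μ σ2 n (insert j Q) = μ +
      σ2 * (((n j : ℝ) + S) ^ 2 - ((n j : ℝ) ^ 2 + A)) / ((n j : ℝ) + S) := by
    rw [costw_eq μ σ2 n (insert j Q) (Finset.insert_nonempty j Q) hn, hsum, hsumsq]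
  have he1 : err μ σ2 n {j} j = μ / (n j : ℝ) := by
    unfold err
    simp
  have he2 : err μ σ2 n (insert j Q) j = μ / ((n j : ℝ) + S) +
      σ2 * (A + S ^ 2) / ((n j : ℝ) + S) ^ 2 := by
    unfold err
    rw [herase, hsum, ← hS, ← hA]
  -- the key identity relating the two differences
  have hid : err μ σ2 n {j} j - err μ σ2 n (insert j Q) j
      = (S / ((n j : ℝ) * ((n j : ℝ) + S))) *
        (costw μ σ2 n {j} + costw μ σ2 n Q - costw μ σ2 n (insert j Q)) := by
    rw [hc1, hc2, hc3, he1, he2]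
    field_simp
    ring
  have hpos : 0 < S / ((n j : ℝ) * ((n j : ℝ) + S)) := by positivity
  constructor
  · intro h
    have : 0 ≤ costw μ σ2 n {j} + costw μ σ2 n Q - costw μ σ2 n (insert j Q) := by linarith
    have := mul_nonneg hpos.le this
    rw [← hid] at this
    linarith
  · intro h
    have h1 : 0 ≤ err μ σ2 n {j} j - err μ σ2 n (insert j Q) j := by linarith
    rw [hid] at h1
    have := nonneg_of_mul_nonneg_right h1 hpos
    have h2 := (mul_nonneg_iff_of_pos_left hpos).mp h1
    linarith
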